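/- For k ≥ 1, the residue w_k := res L^k of the k-th power of the KP Lax operator satisfies ∂w_k/∂f_k = k, i.e. Σ_{a+b=k-1} res(L^a ∘ ∂ₓ^{-k} ∘ L^b) = k. Consequently the change of variables f_k ↦ w_k is triangular: w_k - k f_k depends only on the variables f_a^{(l)} with a ≤ k-1. -/
import Mathlib


/-- Generalized binomial coefficient `k(k-1)⋯(k-l+1)/l!` for `k : ℤ`, `l : ℕ`. -/
def zchoose (k : ℤ) (l : ℕ) : ℤ :=
  if 0 ≤ k then (k.toNat).choose l else (-1) ^ l * ((l - 1 - k).toNat).choose l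

/-- Composition of pseudo-differential operators `A = Σ aₙ ∂ⁿ`, `B = Σ bₙ ∂ⁿ` (given by
their coefficient functions `ℤ → R`, supported in degrees bounded above) over a
differential ring `(R, d)`, using the rule
`∂ᵏ ∘ a = Σ_{l≥0} (k(k-1)⋯(k-l+1)/l!) (dˡ a) ∂^{k-l}`. -/
noncomputable def pdoComp {R : Type*} [CommRing R] (d : R → R) (A B : ℤ → R) : ℤ → R :=
  fun n => ∑ᶠ p : ℤ × ℕ, A p.1 * (zchoose p.1 p.2 • d^[p.2] (B (n + p.2 - p.1)))

/-- The formal adjoint `(Σ aₙ ∂ⁿ)† = Σ (-∂)ⁿ ∘ aₙ`. -/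
noncomputable def pdoAdj {R : Type*} [CommRing R] (d : R → R) (A : ℤ → R) : ℤ → R :=
  fun m => ∑ᶠ l : ℕ, ((-1) ^ (m + l).natAbs : ℤ) •
    (zchoose (m + l) l • d^[l] (A (m + l)))

/-- The residue of a pseudo-differential operator: the coefficient of `∂^{-1}`. -/
def pdoRes {R : Type*} [CommRing R] (A : ℤ → R) : R := A (-1)

/-- The differential polynomial ring `ℂ[f_i^{(j)}]` in the variables `f_i^{(j)}`,
`i ≥ 1`, `j ≥ 0` (indexed by pairs `(i,j)`). -/
noncomputable abbrev DPRing : Type := MvPolynomial (ℕ × ℕ) ℂ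

/-- The variable `f_i^{(j)}`. -/
noncomputable def fv (i j : ℕ) : DPRing := MvPolynomial.X (i, j)

/-- The derivation `∂ₓ` with `∂ₓ f_i^{(j)} = f_i^{(j+1)}`. -/
noncomputable def Dx : Derivation ℂ DPRing DPRing :=
  MvPolynomial.mkDerivation ℂ (fun p : ℕ × ℕ => MvPolynomial.X (p.1, p.2 + 1))

/-- The KP Lax operator `L = ∂ₓ + Σ_{i≥1} fᵢ ∂ₓ^{-i}` as a coefficient function. -/
noncomputable def Lop : ℤ → DPRing :=
  fun n => if n = 1 then 1 else if n ≤ -1 then fv (-n).toNat 0 else 0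

/-- Powers of a pseudo-differential operator. -/
noncomputable def pdoPow {R : Type*} [CommRing R] (d : R → R) (A : ℤ → R) : ℕ → (ℤ → R)
  | 0 => fun n => if n = 0 then 1 else 0
  | k + 1 => pdoComp d A (pdoPow d A k)

/-- `L^k` as a pseudo-differential operator. -/
noncomputable def Lpow (k : ℕ) : ℤ → DPRing := pdoPow (⇑Dx) Lop k

/-- The purely differential part `A₊` of a pseudo-differential operator. -/
def pdoPlus {R : Type*} [CommRing R] (A : ℤ → R) : ℤ → R :=
  fun n => if 0 ≤ n then A n else 0

/-- The commutator of two pseudo-differential operators. -/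
noncomputable def pdoBracket {R : Type*} [CommRing R] (d : R → R) (A B : ℤ → R) : ℤ → R :=
  fun n => pdoComp d A B n - pdoComp d B A n

/-- `S_{i,2}`: the coefficient of `∂ₓ^{-i}` in `[(L²)₊, L]`, i.e. the second KP flow
`∂fᵢ/∂T₂`. -/
noncomputable def S2 (i : ℕ) : DPRing :=
  pdoBracket (⇑Dx) (pdoPlus (Lpow 2)) Lop (-(i : ℤ))

/-- The total degree of a monomial (exponent function). -/
def mdeg (m : (ℕ × ℕ) →₀ ℕ) : ℕ := ∑ x ∈ m.support, m x


section Helpers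

open MvPolynomial

lemma zchoose_zero (a : ℤ) : zchoose a 0 = 1 := by
  unfold zchoose; split <;> simp

lemma zchoose_one_big {l : ℕ} (hl : 2 ≤ l) : zchoose 1 l = 0 := by
  unfold zchoose
  rw [if_pos (by norm_num)]
  simp only [Int.toNat_one]
  exact_mod_cast Nat.choose_eq_zero_of_lt (by omega)

noncomputable abbrev Msup (m : ℤ) : Subalgebra ℂ DPRing :=
  MvPolynomial.supported ℂ {p : ℕ × ℕ | (p.1 : ℤ) ≤ m}

lemma Msup_mono {m m' : ℤ} (h : m ≤ m') : Msup m ≤ Msup m' :=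
  MvPolynomial.supported_mono (fun p hp => le_trans hp h)

lemma fv_mem_Msup {i j : ℕ} {m : ℤ} (h : (i : ℤ) ≤ m) : fv i j ∈ Msup m := by
  rw [fv, MvPolynomial.X_mem_supported]; exact h

lemma Dx_fv (i j : ℕ) : Dx (fv i j) = fv i (j+1) := by
  simp [Dx, fv, MvPolynomial.mkDerivation_X]

lemma Dx_mem_Msup {m : ℤ} {r : DPRing} (h : r ∈ Msup m) : Dx r ∈ Msup m := by
  have h' : r ∈ Algebra.adjoin ℂ
      (MvPolynomial.X '' {p : ℕ × ℕ | (p.1 : ℤ) ≤ m}) := h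
  clear h
  induction h' using Algebra.adjoin_induction with
  | mem x hx =>
    obtain ⟨p, hp, rfl⟩ := hx
    rw [show Dx (MvPolynomial.X p) = fv p.1 (p.2 + 1) from Dx_fv p.1 p.2]
    exact fv_mem_Msup hp
  | algebraMap r => simpa using zero_mem (Msup m)
  | add x y hx hy ihx ihy => rw [map_add]; exact add_mem ihx ihy
  | mul x y hx hy ihx ihy =>
    rw [Derivation.leibniz, smul_eq_mul, smul_eq_mul]
    exact add_mem (mul_mem hx ihy) (mul_mem hy ihx)

lemma DxIter_mem_Msup {m : ℤ} {r : DPRing} (l : ℕ) (h : r ∈ Msup m) :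
    (⇑Dx)^[l] r ∈ Msup m := by
  induction l generalizing r with
  | zero => simpa using h
  | succ l ih =>
    rw [Function.iterate_succ_apply]
    exact ih (Dx_mem_Msup h)

lemma DxIter_fv (i j l : ℕ) : (⇑Dx)^[l] (fv i j) = fv i (j + l) := by
  induction l generalizing j with
  | zero => simp
  | succ l ih =>
    rw [Function.iterate_succ_apply, Dx_fv, ih]
    ring_nf

lemma pderiv_eq_zero_of_supported {s : Set (ℕ × ℕ)} {i : ℕ × ℕ} (hi : i ∉ s)
    {p : DPRing} (hp : p ∈ MvPolynomial.supported ℂ s) :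
    MvPolynomial.pderiv i p = 0 := by
  refine MvPolynomial.pderiv_eq_zero_of_notMem_vars fun hv => hi ?_
  exact (MvPolynomial.mem_supported.mp hp) hv

end Helpers
section PDOLemmas

variable {R : Type*} [CommRing R] {d : R → R}

lemma iter_fixed_zero (hd : d 0 = 0) (l : ℕ) : d^[l] 0 = 0 :=
  Function.iterate_fixed hd l

lemma pdoComp_ub {A B : ℤ → R} {a b : ℤ} (hd : d 0 = 0)
    (hA : ∀ m, a < m → A m = 0) (hB : ∀ m, b < m → B m = 0) :
    ∀ n, a + b < n → pdoComp d A B n = 0 := by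
  intro n hn
  unfold pdoComp
  refine finsum_eq_zero_of_forall_eq_zero fun p => ?_
  by_cases hp : a < p.1
  · rw [hA p.1 hp, zero_mul]
  · rw [hB (n + p.2 - p.1) (by push_cast; omega), iter_fixed_zero hd, smul_zero, mul_zero]

lemma pdoComp_top {A B : ℤ → R} {a b : ℤ} (hd : d 0 = 0)
    (hA : ∀ m, a < m → A m = 0) (hB : ∀ m, b < m → B m = 0) :
    pdoComp d A B (a + b) = A a * B b := by
  unfold pdoComp
  rw [finsum_eq_single _ ((a, 0) : ℤ × ℕ)]
  · simp [zchoose_zero]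
  · intro p hp
    by_cases h1 : a < p.1
    · rw [hA p.1 h1, zero_mul]
    · have : b < a + b + p.2 - p.1 := by
        rcases Nat.eq_zero_or_pos p.2 with h2 | h2
        · have : p.1 ≠ a ∨ p.2 ≠ 0 := by
            by_contra hc
            push_neg at hc
            exact hp (Prod.ext hc.1 hc.2)
          omega
        · omega
      rw [hB _ this, iter_fixed_zero hd, smul_zero, mul_zero]

lemma Dx_zero : Dx (0 : DPRing) = 0 := map_zero _

lemma Lop_ub : ∀ m : ℤ, 1 < m → Lop m = 0 := by
  intro m hm
  unfold Lop
  rw [if_neg (by omega), if_neg (by omega)]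

lemma Lpow_ub (k : ℕ) : ∀ m : ℤ, (k : ℤ) < m → Lpow k m = 0 := by
  induction k with
  | zero =>
    intro m hm
    simp only [Lpow, pdoPow]
    rw [if_neg (by omega)]
  | succ k ih =>
    intro m hm
    have : Lpow (k + 1) = pdoComp (⇑Dx) Lop (Lpow k) := rfl
    rw [this]
    exact pdoComp_ub Dx_zero Lop_ub ih m (by push_cast at hm ⊢; omega)

lemma Lpow_top (k : ℕ) : Lpow k (k : ℤ) = 1 := by
  induction k with
  | zero => simp [Lpow, pdoPow]
  | succ k ih =>
    have h : Lpow (k + 1) = pdoComp (⇑Dx) Lop (Lpow k) := rfl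
    have h2 : ((k : ℤ) + 1) = 1 + (k : ℤ) := by ring
    rw [h, show ((k + 1 : ℕ) : ℤ) = 1 + (k : ℤ) by push_cast; ring,
      pdoComp_top Dx_zero Lop_ub (Lpow_ub k)]
    rw [ih, show Lop 1 = 1 from by unfold Lop; simp, one_mul]

end PDOLemmas
section Structure

noncomputable def lead (k : ℕ) (n : ℤ) : DPRing :=
  (if n = (k : ℤ) then 1 else 0) +
  (if n ≤ (k : ℤ) - 2 then (k : DPRing) * fv ((k : ℤ) - n - 1).toNat 0 else 0)

lemma lead_mem (k : ℕ) (n : ℤ) : lead k n ∈ Msup ((k : ℤ) - n - 1) := by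
  unfold lead
  refine add_mem ?_ ?_
  · split
    · exact one_mem _
    · exact zero_mem _
  · split
    · rename_i h
      refine mul_mem (natCast_mem _ _) (fv_mem_Msup ?_)
      rw [Int.toNat_of_nonneg (by omega)]
    · exact zero_mem _

lemma Dx_lead_mem (k : ℕ) (n : ℤ) : Dx (lead k n) ∈ Msup ((k : ℤ) - n - 1) := by
  unfold lead
  rw [map_add]
  refine add_mem ?_ ?_
  · have : (if n = (k : ℤ) then (1:DPRing) else 0) = MvPolynomial.C (if n = (k:ℤ) then (1:ℂ) else 0) := by
      split <;> simp
    rw [this]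
    rw [show Dx (MvPolynomial.C (if n = (k:ℤ) then (1:ℂ) else 0)) = 0 from Dx.map_algebraMap _]
    exact zero_mem _
  · split
    · rename_i h
      rw [show ((k : DPRing) * fv ((k:ℤ) - n - 1).toNat 0) = (k : ℕ) • fv ((k:ℤ) - n - 1).toNat 0 from (nsmul_eq_mul _ _).symm]
      rw [map_nsmul, Dx_fv]
      exact nsmul_mem (fv_mem_Msup (by rw [Int.toNat_of_nonneg (by omega)])) _
    · rw [map_zero]; exact zero_mem _

lemma Lpow_sub_lead (k : ℕ) : ∀ n : ℤ, Lpow k n - lead k n ∈ Msup ((k : ℤ) - n - 2) := by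
  induction k with
  | zero =>
    intro n
    have h0 : Lpow 0 n = if n = 0 then 1 else 0 := rfl
    have h1 : lead 0 n = if n = 0 then 1 else 0 := by
      unfold lead
      simp
    rw [h0, h1, sub_self]
    exact zero_mem _
  | succ k ih =>
    -- consequences of ih
    have hmem : ∀ m : ℤ, Lpow k m ∈ Msup ((k : ℤ) - m - 1) := by
      intro m
      have := add_mem (Msup_mono (by omega) (ih m)) (lead_mem k m)
      simpa using this
    intro n
    have hcast : ((k + 1 : ℕ) : ℤ) = (k : ℤ) + 1 := by push_cast; ring
    rcases lt_trichotomy ((k : ℤ) + 1) n with hn | hn | hn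
    · -- n > k+1 : everything is 0
      rw [Lpow_ub (k+1) n (by omega), lead, if_neg (by omega), if_neg (by omega)]
      simpa using zero_mem _
    · -- n = k+1
      rw [← hn, ← hcast, Lpow_top (k+1), lead, hcast, if_pos rfl, if_neg (by omega)]
      simpa using zero_mem _
    · -- n ≤ k : the main case
      have hnk : n ≤ (k : ℤ) := by omega
      set g : ℤ × ℕ → DPRing := fun p =>
        Lop p.1 * (zchoose p.1 p.2 • (⇑Dx)^[p.2] (Lpow k (n + p.2 - p.1))) with hg
      set S : Finset (ℤ × ℕ) :=
        Finset.Icc (n - (k:ℤ)) 1 ×ˢ Finset.range ((k : ℤ) - n + 2).toNat with hS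
      have hsupp : Function.support g ⊆ ↑S := by
        intro p hp
        have hLop : Lop p.1 ≠ 0 := by
          intro h
          apply hp
          rw [hg]
          simp [h]
        have hL : Lpow k (n + p.2 - p.1) ≠ 0 := by
          intro h
          apply hp
          rw [hg]
          simp [h, iter_fixed_zero Dx_zero]
        have h1 : p.1 ≤ 1 := by
          by_contra h
          exact hLop (Lop_ub p.1 (by omega))
        have h2 : n + (p.2 : ℤ) - p.1 ≤ (k : ℤ) := by
          by_contra h
          exact hL (Lpow_ub k _ (by omega))
        simp only [hS, Finset.coe_product, Set.mem_prod, Finset.mem_coe,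
          Finset.mem_Icc, Finset.mem_range]
        constructor
        · constructor <;> omega
        · exact Int.lt_toNat.mpr (by omega)
      have hLpow : Lpow (k+1) n = ∑ p ∈ S, g p := by
        have : Lpow (k+1) n = pdoComp (⇑Dx) Lop (Lpow k) n := rfl
        rw [this]
        exact finsum_eq_sum_of_support_subset _ hsupp
      -- the leading terms, as a function on index pairs
      set e : ℤ × ℕ → DPRing := fun p =>
        (if p = ((1:ℤ), (0:ℕ)) then lead k (n-1) else 0) +
        (if p = ((n - (k:ℤ)), (0:ℕ)) ∧ n ≤ (k:ℤ) - 1 then fv ((k:ℤ) - n).toNat 0 else 0)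
        with he
      have h10S : ((1:ℤ), (0:ℕ)) ∈ S := by
        simp only [hS, Finset.mem_product, Finset.mem_Icc, Finset.mem_range]
        exact ⟨⟨by omega, le_refl _⟩, Int.lt_toNat.mpr (by omega)⟩
      have hp0S : ((n - (k:ℤ)), (0:ℕ)) ∈ S := by
        simp only [hS, Finset.mem_product, Finset.mem_Icc, Finset.mem_range]
        exact ⟨⟨le_refl _, by omega⟩, Int.lt_toNat.mpr (by omega)⟩
      have hsum_e : ∑ p ∈ S, e p = lead (k+1) n := by
        rw [he, Finset.sum_add_distrib]
        by_cases hc : n ≤ (k:ℤ) - 1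
        · simp only [hc, and_true]
          rw [Finset.sum_ite_eq' S ((1:ℤ),(0:ℕ)) (fun _ => lead k (n-1)),
              Finset.sum_ite_eq' S ((n - (k:ℤ)),(0:ℕ))
                (fun _ => fv ((k:ℤ)-n).toNat 0),
              if_pos h10S, if_pos hp0S]
          unfold lead
          rw [if_neg (by omega), if_pos (by omega), if_neg (by push_cast; omega),
            if_pos (by push_cast; omega)]
          rw [show ((k:ℤ) - (n-1) - 1).toNat = ((k:ℤ) - n).toNat by congr 1; ring,
            show (((k+1:ℕ):ℤ) - n - 1).toNat = ((k:ℤ) - n).toNat by congr 1; push_cast; ring]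
          push_cast
          ring
        · simp only [hc, and_false, if_false]
          rw [Finset.sum_ite_eq' S ((1:ℤ),(0:ℕ)) (fun _ => lead k (n-1)), if_pos h10S]
          unfold lead
          rw [if_neg (by omega), if_neg (by omega), if_neg (by push_cast; omega),
            if_neg (by push_cast; omega)]
          simp
      have hkey : Lpow (k+1) n - lead (k+1) n = ∑ p ∈ S, (g p - e p) := by
        rw [Finset.sum_sub_distrib, ← hLpow, hsum_e]
      have eval_e : ∀ (q1 : ℤ) (q2 : ℕ), ¬((q1,q2) = ((1:ℤ),(0:ℕ))) →
          ¬((q1,q2) = (n - (k:ℤ),(0:ℕ)) ∧ n ≤ (k:ℤ)-1) → e (q1,q2) = 0 := by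
        intro q1 q2 hq1 hq2
        rw [he]
        simp only [hq1, hq2, if_false, add_zero]
      rw [show ((k+1:ℕ):ℤ) - n - 2 = (k:ℤ) - n - 1 by push_cast; ring, hkey]
      refine Subalgebra.sum_mem _ fun p hp => ?_
      obtain ⟨p1, p2⟩ := p
      simp only [hS, Finset.mem_product, Finset.mem_Icc, Finset.mem_range] at hp
      obtain ⟨⟨hp1l, hp1u⟩, hp2⟩ := hp
      have hp2' : (p2:ℤ) < (k:ℤ) - n + 2 := Int.lt_toNat.mp hp2
      by_cases h1 : p1 = 1
      · subst h1
        match p2, hp2' with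
        | 0, _ =>
          have hg0 : g (1, 0) = Lpow k (n - 1) := by
            simp only [hg]
            rw [show Lop 1 = 1 from by unfold Lop; simp, zchoose_zero, one_smul, one_mul,
              Function.iterate_zero_apply, show n + ((0:ℕ):ℤ) - 1 = n - 1 by push_cast; ring]
          have he0 : e (1, 0) = lead k (n - 1) := by
            have h2 : ¬(((1:ℤ),(0:ℕ)) = ((n - (k:ℤ)),(0:ℕ)) ∧ n ≤ (k:ℤ)-1) := by
              rintro ⟨hq, hc⟩
              rw [Prod.mk.injEq] at hq
              omega
            rw [he]
            simp only [h2, if_false, add_zero, if_pos]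
          rw [hg0, he0]
          exact Msup_mono (by omega) (ih (n-1))
        | 1, _ =>
          have hg1 : g (1, 1) = Dx (Lpow k n) := by
            simp only [hg]
            rw [show Lop 1 = 1 from by unfold Lop; simp,
              show zchoose 1 1 = 1 from by unfold zchoose; simp, one_smul, one_mul,
              Function.iterate_one, show n + ((1:ℕ):ℤ) - 1 = n by push_cast; ring]
          have he1 : e (1, 1) = 0 := by
            refine eval_e 1 1 ?_ ?_
            · rw [Prod.mk.injEq]; rintro ⟨-, h⟩; omega
            · rintro ⟨hq, -⟩; rw [Prod.mk.injEq] at hq; omega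
          rw [hg1, he1, sub_zero,
            show Dx (Lpow k n) = Dx (Lpow k n - lead k n) + Dx (lead k n) from by
              rw [← map_add, sub_add_cancel]]
          exact add_mem (Msup_mono (by omega) (Dx_mem_Msup (ih n)))
            (Dx_lead_mem k n)
        | (l+2), _ =>
          have hgl : g (1, l+2) = 0 := by
            simp only [hg]
            rw [zchoose_one_big (by omega), zero_smul, mul_zero]
          have hel : e (1, l+2) = 0 := by
            refine eval_e 1 (l+2) ?_ ?_
            · rw [Prod.mk.injEq]; rintro ⟨-, h⟩; omega
            · rintro ⟨hq, -⟩; rw [Prod.mk.injEq] at hq; omega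
          rw [hgl, hel, sub_zero]
          exact zero_mem _
      · by_cases h0 : p1 = 0
        · subst h0
          have hg0 : g (0, p2) = 0 := by
            simp only [hg]
            rw [show Lop 0 = 0 from by unfold Lop; simp, zero_mul]
          have he0 : e (0, p2) = 0 := by
            refine eval_e 0 p2 ?_ ?_
            · rw [Prod.mk.injEq]; rintro ⟨h, -⟩; omega
            · rintro ⟨hq, hc⟩; rw [Prod.mk.injEq] at hq; omega
          rw [hg0, he0, sub_zero]
          exact zero_mem _
        · have hp1 : p1 ≤ -1 := by omega
          have hLopv : Lop p1 = fv (-p1).toNat 0 := by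
            unfold Lop
            rw [if_neg h1, if_pos (by omega)]
          have hq1 : ¬((p1,p2) = ((1:ℤ),(0:ℕ))) := by
            rw [Prod.mk.injEq]; rintro ⟨h, -⟩; omega
          rcases lt_trichotomy ((k:ℤ)) (n + (p2:ℤ) - p1) with harg | harg | harg
          · -- argument above top order: term vanishes
            have hg0 : g (p1, p2) = 0 := by
              simp only [hg]
              rw [Lpow_ub k _ harg, iter_fixed_zero Dx_zero, smul_zero, mul_zero]
            have he0 : e (p1, p2) = 0 := by
              refine eval_e p1 p2 hq1 ?_
              rintro ⟨hq, hc⟩; rw [Prod.mk.injEq] at hq; omega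
            rw [hg0, he0, sub_zero]
            exact zero_mem _
          · -- argument exactly k
            match p2, hp2', harg with
            | 0, _, harg =>
              have hp1v : p1 = n - (k:ℤ) := by omega
              have hg0 : g (p1, 0) = fv ((k:ℤ) - n).toNat 0 := by
                simp only [hg]
                rw [Function.iterate_zero_apply, zchoose_zero, one_smul,
                  show n + ((0:ℕ):ℤ) - p1 = (k:ℤ) by omega, Lpow_top, mul_one,
                  hLopv, show -p1 = (k:ℤ) - n by omega]
              have he0 : e (p1, 0) = fv ((k:ℤ) - n).toNat 0 := by
                have hq2 : ((p1,(0:ℕ)) = ((n - (k:ℤ)),(0:ℕ)) ∧ n ≤ (k:ℤ)-1) := by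
                  constructor
                  · rw [Prod.mk.injEq]; exact ⟨hp1v, rfl⟩
                  · omega
                rw [he]
                simp only [hq2.2, if_true, and_self]
                rw [if_neg (by rw [Prod.mk.injEq]; rintro ⟨h, -⟩; omega),
                  if_pos ⟨hq2.1, trivial⟩, zero_add]
              rw [hg0, he0, sub_self]
              exact zero_mem _
            | (l+1), _, harg =>
              have hg0 : g (p1, l+1) = 0 := by
                simp only [hg]
                rw [show n + ((l+1:ℕ):ℤ) - p1 = (k:ℤ) by push_cast at harg ⊢; omega,
                  Lpow_top, Function.iterate_succ_apply, Derivation.map_one_eq_zero,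
                  iter_fixed_zero Dx_zero, smul_zero, mul_zero]
              have he0 : e (p1, l+1) = 0 := by
                refine eval_e p1 (l+1) hq1 ?_
                rintro ⟨hq, -⟩; rw [Prod.mk.injEq] at hq; omega
              rw [hg0, he0, sub_zero]
              exact zero_mem _
          · -- argument strictly below k
            have he0 : e (p1, p2) = 0 := by
              refine eval_e p1 p2 hq1 ?_
              rintro ⟨hq, hc⟩
              rw [Prod.mk.injEq] at hq
              omega
            rw [he0, sub_zero]
            simp only [hg]
            rw [hLopv]
            refine mul_mem (fv_mem_Msup ?_) (zsmul_mem (DxIter_mem_Msup _ ?_) _)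
            · rw [Int.toNat_of_nonneg (by omega)]
              omega
            · exact Msup_mono (by omega) (hmem (n + (p2:ℤ) - p1))

end Structure
lemma lead_k_neg_one (k : ℕ) (hk : 1 ≤ k) : lead k (-1) = (k : DPRing) * fv k 0 := by
  unfold lead
  rw [if_neg (by omega), if_pos (by omega), zero_add]
  congr 2
  rw [show ((k:ℤ) - (-1) - 1) = (k:ℤ) by ring, Int.toNat_natCast]

/-- For `k ≥ 1`, the residue `w_k := res L^k` satisfies `∂w_k/∂f_k = k`, i.e.
`Σ_{a+b=k-1} res(L^a ∘ ∂ₓ^{-k} ∘ L^b) = k`; consequently the change of variables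
`f_k ↦ w_k` is triangular: `w_k - k·f_k` depends only on the variables `f_a^{(l)}`
with `a ≤ k-1`. -/
theorem res_Lpow_triangular (k : ℕ) (hk : 1 ≤ k) :
    MvPolynomial.pderiv (k, 0) (Lpow k (-1)) = (k : MvPolynomial (ℕ × ℕ) ℂ) ∧
      (∑ a ∈ Finset.range k,
        pdoComp (⇑Dx) (Lpow a)
          (pdoComp (⇑Dx) (fun n => if n = -(k : ℤ) then 1 else 0) (Lpow (k - 1 - a))) (-1))
        = (k : MvPolynomial (ℕ × ℕ) ℂ) ∧
      Lpow k (-1) - (k : ℂ) • fv k 0 ∈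
        MvPolynomial.supported ℂ {p : ℕ × ℕ | p.1 ≤ k - 1} := by
  have h3' : Lpow k (-1) - (k : DPRing) * fv k 0 ∈ Msup ((k:ℤ) - 1) := by
    have h := Lpow_sub_lead k (-1)
    rw [lead_k_neg_one k hk] at h
    exact Msup_mono (by omega) h
  have hsmul : (k : ℂ) • (fv k 0) = (k : DPRing) * fv k 0 := by
    rw [Algebra.smul_def, map_natCast]
  refine ⟨?_, ?_, ?_⟩
  · -- the partial derivative
    have hd : Lpow k (-1) = (Lpow k (-1) - (k : DPRing) * fv k 0) + (k : DPRing) * fv k 0 := by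
      ring
    rw [hd, map_add]
    rw [pderiv_eq_zero_of_supported (s := {p : ℕ × ℕ | (p.1:ℤ) ≤ (k:ℤ) - 1})
      (by simp only [Set.mem_setOf_eq]; omega) h3', zero_add]
    rw [← nsmul_eq_mul, map_nsmul, fv, MvPolynomial.pderiv_X_self, nsmul_eq_mul, mul_one]
  · -- the residue sum
    have hone : ∀ a ∈ Finset.range k,
        pdoComp (⇑Dx) (Lpow a)
          (pdoComp (⇑Dx) (fun n => if n = -(k : ℤ) then 1 else 0) (Lpow (k - 1 - a))) (-1)
        = 1 := by
      intro a ha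
      rw [Finset.mem_range] at ha
      set b : ℕ := k - 1 - a with hb
      have hbz : (b : ℤ) = (k : ℤ) - 1 - a := by omega
      set δ : ℤ → DPRing := fun n => if n = -(k : ℤ) then 1 else 0 with hδ
      have hδub : ∀ m : ℤ, -(k:ℤ) < m → δ m = 0 := by
        intro m hm
        rw [hδ]
        exact if_neg (by omega)
      have hinner_ub : ∀ m : ℤ, (-(k:ℤ) + b) < m → pdoComp (⇑Dx) δ (Lpow b) m = 0 :=
        pdoComp_ub Dx_zero hδub (Lpow_ub b)
      have hinner_top : pdoComp (⇑Dx) δ (Lpow b) (-(k:ℤ) + b) = 1 := by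
        rw [pdoComp_top Dx_zero hδub (Lpow_ub b), Lpow_top, mul_one, hδ]
        simp
      rw [show (-1 : ℤ) = (a:ℤ) + (-(k:ℤ) + (b:ℤ)) by omega,
        pdoComp_top Dx_zero (Lpow_ub a) hinner_ub, Lpow_top, hinner_top, one_mul]
    rw [Finset.sum_congr rfl hone, Finset.sum_const, Finset.card_range, nsmul_eq_mul, mul_one]
  · -- triangularity
    have hset : {p : ℕ × ℕ | (p.1:ℤ) ≤ (k:ℤ) - 1} = {p : ℕ × ℕ | p.1 ≤ k - 1} := by
      ext p
      simp only [Set.mem_setOf_eq]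
      omega
    rw [hsmul]
    rw [show MvPolynomial.supported ℂ {p : ℕ × ℕ | p.1 ≤ k - 1} = Msup ((k:ℤ) - 1) from by
      rw [← hset]]
    exact h3'
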